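/- arXiv:1105.2244 — 2 statements merged into one kernel-verified Lean document; each statement's English description precedes it below -/
import Mathlib

section
/- Fix $0 \le j \le n-1$ and for each positive integer $t$ define the degree sequence $d^{j,t} \in \mathbb{Z}^{n+1}$ by $d^{j,t}_k = kt$ for $k \le j$ and $d^{j,t}_k = (k-1)t + 1$ for $k > j$. Define $\mathbf{v}_j(d)_\ell = \frac{\prod_{i \ne j}|d_i - d_j|}{\prod_{i \ne \ell}|d_i - d_\ell|}$ for $0 \le \ell \le n$. Then $\lim_{t\to\infty} \mathbf{v}_j(d^{j,t}) = \epsilon_j + \epsilon_{j+1}$ in $\mathbb{Q}^{n+1}$ (coordinatewise, as real limits). -/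
open Filter

/-- The degree sequence `d^{j,t}`: `d_k = kt` for `k ≤ j` and `d_k = (k-1)t + 1` for `k > j`,
realized as a real number. -/
noncomputable def degSeq (j t k : ℕ) : ℝ := if k ≤ j then (k * t : ℕ) else ((k - 1) * t + 1 : ℕ)

/-- The `ℓ`-th coordinate of the normalized Herzog–Kühl vector
`v_j(d)_ℓ = (∏_{i≠j} |d_i - d_j|) / (∏_{i≠ℓ} |d_i - d_ℓ|)`. -/
noncomputable def vCoord (n j ℓ : ℕ) (d : ℕ → ℝ) : ℝ :=
  (∏ i ∈ (Finset.range (n + 1)).erase j, |d i - d j|) /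
    (∏ i ∈ (Finset.range (n + 1)).erase ℓ, |d i - d ℓ|)

noncomputable def aco (j k : ℕ) : ℝ := if k ≤ j then (k : ℝ) else (k : ℝ) - 1
noncomputable def bco (j k : ℕ) : ℝ := if k ≤ j then 0 else 1

lemma degSeq_eq (j t k : ℕ) : degSeq j t k = aco j k * t + bco j k := by
  unfold degSeq aco bco
  split
  · push_cast; ring
  · rename_i h
    have hk : 1 ≤ k := by omega
    push_cast [Nat.cast_sub hk]
    ring

lemma degSeq_ne (j t : ℕ) (ht : 1 ≤ t) {i k : ℕ} (h : i ≠ k) :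
    degSeq j t i ≠ degSeq j t k := by
  unfold degSeq
  intro heq
  rcases le_or_gt i j with hi | hi <;> rcases le_or_gt k j with hk | hk
  · rw [if_pos hi, if_pos hk, Nat.cast_inj] at heq
    exact h (Nat.eq_of_mul_eq_mul_right (by omega) heq)
  · rw [if_pos hi, if_neg (by omega), Nat.cast_inj] at heq
    have h1 : i ≤ k - 1 := by omega
    have h2 := Nat.mul_le_mul_right t h1
    omega
  · rw [if_neg (by omega), if_pos hk, Nat.cast_inj] at heq
    have h1 : k ≤ i - 1 := by omega
    have h2 := Nat.mul_le_mul_right t h1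
    omega
  · rw [if_neg (by omega), if_neg (by omega), Nat.cast_inj] at heq
    have h6 : (i - 1) * t = (k - 1) * t := by omega
    have h2 : i - 1 = k - 1 := Nat.eq_of_mul_eq_mul_right (by omega) h6
    omega

lemma aco_ne (j : ℕ) {i k : ℕ} (h : i ≠ k) (h2 : ¬(i = j ∧ k = j + 1))
    (h3 : ¬(i = j + 1 ∧ k = j)) : aco j i ≠ aco j k := by
  unfold aco
  intro heq
  rcases le_or_gt i j with hi | hi <;> rcases le_or_gt k j with hk | hk
  · rw [if_pos hi, if_pos hk, Nat.cast_inj] at heq; exact h heq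
  · rw [if_pos hi, if_neg (by omega)] at heq
    have h4 : (i : ℝ) + 1 = (k : ℝ) := by linarith
    have h5 : i + 1 = k := by exact_mod_cast h4
    omega
  · rw [if_neg (by omega), if_pos hk] at heq
    have h4 : (i : ℝ) = (k : ℝ) + 1 := by linarith
    have h5 : i = k + 1 := by exact_mod_cast h4
    omega
  · rw [if_neg (by omega), if_neg (by omega)] at heq
    have h4 : (i : ℝ) = (k : ℝ) := by linarith
    have h5 : i = k := by exact_mod_cast h4
    omega

lemma keyLim (c₁ e₁ c₂ e₂ : ℝ) (hc₂ : c₂ ≠ 0) :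
    Tendsto (fun t : ℕ => |c₁ * t + e₁| / |c₂ * t + e₂|) atTop (nhds (|c₁| / |c₂|)) := by
  have ht : Tendsto (fun t : ℕ => (t : ℝ)) atTop atTop := tendsto_natCast_atTop_atTop
  have h1 : Tendsto (fun t : ℕ => c₁ + e₁ / t) atTop (nhds (c₁ + 0)) :=
    tendsto_const_nhds.add (Tendsto.div_atTop tendsto_const_nhds ht)
  have h2 : Tendsto (fun t : ℕ => c₂ + e₂ / t) atTop (nhds (c₂ + 0)) :=
    tendsto_const_nhds.add (Tendsto.div_atTop tendsto_const_nhds ht)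
  have h3 := (h1.div h2 (by simpa using hc₂)).abs
  refine Tendsto.congr' ?_ (by simpa [abs_div] using h3)
  filter_upwards [eventually_ge_atTop 1] with t ht1
  have htpos : (0:ℝ) < t := by exact_mod_cast Nat.lt_of_lt_of_le Nat.zero_lt_one ht1
  have htne : (t:ℝ) ≠ 0 := ne_of_gt htpos
  have h5 : ∀ c e : ℝ, |c + e / t| * t = |c * t + e| := by
    intro c e
    rw [show (t:ℝ) = |(t:ℝ)| from (abs_of_pos htpos).symm, ← abs_mul]
    congr 1
    field_simp
    rw [abs_of_pos htpos]; ring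
  show |c₁ + e₁ / t| / |c₂ + e₂ / t| = |c₁ * t + e₁| / |c₂ * t + e₂|
  rw [← mul_div_mul_right _ _ htne, h5, h5]

lemma prod_ne (n j ℓ t : ℕ) (ht : 1 ≤ t) :
    ∏ i ∈ (Finset.range (n + 1)).erase ℓ, |degSeq j t i - degSeq j t ℓ| ≠ 0 := by
  rw [Finset.prod_ne_zero_iff]
  intro i hi
  rw [abs_ne_zero, sub_ne_zero]
  exact degSeq_ne j t ht (Finset.ne_of_mem_erase hi)

lemma aco_jsucc (j : ℕ) : aco j (j + 1) = aco j j := by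
  unfold aco
  rw [if_neg (by omega), if_pos le_rfl]
  push_cast
  ring

/-- For fixed `0 ≤ j ≤ n-1`, as `t → ∞` the vectors `v_j(d^{j,t})` converge coordinatewise
to `ρ_j = ε_j + ε_{j+1}`. -/
theorem stmt4 (n j : ℕ) (hj : j + 1 ≤ n) (ℓ : ℕ) (hℓ : ℓ ≤ n) :
    Tendsto (fun t : ℕ => vCoord n j ℓ (degSeq j t)) atTop
      (nhds (if ℓ = j ∨ ℓ = j + 1 then 1 else 0)) := by
  by_cases hlj : ℓ = j
  · subst hlj
    rw [if_pos (Or.inl rfl)]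
    refine Tendsto.congr' ?_ tendsto_const_nhds
    filter_upwards [eventually_ge_atTop 1] with t ht
    exact (div_self (prod_ne n ℓ ℓ t ht)).symm
  · set S := ((Finset.range (n + 1)).erase j).erase ℓ with hS
    have hL : Tendsto
        (fun t : ℕ => ∏ i ∈ S, |degSeq j t i - degSeq j t j| / |degSeq j t i - degSeq j t ℓ|)
        atTop (nhds (∏ i ∈ S, |aco j i - aco j j| / |aco j i - aco j ℓ|)) := by
      apply tendsto_finset_prod
      intro i hi
      have hi1 : i ≠ ℓ := Finset.ne_of_mem_erase hi
      have hi2 : i ≠ j := Finset.ne_of_mem_erase (Finset.mem_of_mem_erase hi)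
      have hc₂ : aco j i - aco j ℓ ≠ 0 := by
        refine sub_ne_zero.mpr (aco_ne j hi1 ?_ ?_)
        · rintro ⟨h1, -⟩; exact hi2 h1
        · rintro ⟨-, h2⟩; exact hlj h2
      have hk := keyLim (aco j i - aco j j) (bco j i - bco j j)
        (aco j i - aco j ℓ) (bco j i - bco j ℓ) hc₂
      refine hk.congr fun t => ?_
      have e1 : (aco j i - aco j j) * t + (bco j i - bco j j) = degSeq j t i - degSeq j t j := by
        rw [degSeq_eq j t i, degSeq_eq j t j]; ring
      have e2 : (aco j i - aco j ℓ) * t + (bco j i - bco j ℓ) = degSeq j t i - degSeq j t ℓ := by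
        rw [degSeq_eq j t i, degSeq_eq j t ℓ]; ring
      rw [e1, e2]
    have heq : (fun t : ℕ =>
          ∏ i ∈ S, |degSeq j t i - degSeq j t j| / |degSeq j t i - degSeq j t ℓ|)
        =ᶠ[atTop] (fun t : ℕ => vCoord n j ℓ (degSeq j t)) := by
      filter_upwards [eventually_ge_atTop 1] with t ht
      unfold vCoord
      have hℓmem : ℓ ∈ (Finset.range (n + 1)).erase j :=
        Finset.mem_erase.mpr ⟨hlj, Finset.mem_range.mpr (by omega)⟩
      have hjmem : j ∈ (Finset.range (n + 1)).erase ℓ :=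
        Finset.mem_erase.mpr ⟨Ne.symm hlj, Finset.mem_range.mpr (by omega)⟩
      rw [← Finset.mul_prod_erase _ _ hℓmem, ← Finset.mul_prod_erase _ _ hjmem,
        Finset.erase_right_comm, abs_sub_comm (degSeq j t ℓ) (degSeq j t j),
        mul_div_mul_left _ _
          (abs_ne_zero.mpr (sub_ne_zero.mpr (degSeq_ne j t ht (Ne.symm hlj)))),
        Finset.prod_div_distrib,
        show ((Finset.range (n + 1)).erase ℓ).erase j = S from Finset.erase_right_comm]
    refine Tendsto.congr' heq ?_
    by_cases hl1 : ℓ = j + 1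
    · subst hl1
      rw [if_pos (Or.inr rfl)]
      have hone : (∏ i ∈ S, |aco j i - aco j j| / |aco j i - aco j (j + 1)|) = 1 := by
        refine Finset.prod_eq_one fun i hi => ?_
        have hi1 : i ≠ j + 1 := Finset.ne_of_mem_erase hi
        have hi2 : i ≠ j := Finset.ne_of_mem_erase (Finset.mem_of_mem_erase hi)
        rw [aco_jsucc]
        exact div_self (abs_ne_zero.mpr (sub_ne_zero.mpr
          (aco_ne j hi2 (by rintro ⟨h1, -⟩; exact hi2 h1)
            (by rintro ⟨h1, -⟩; exact hi1 h1))))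
      rw [← hone]
      exact hL
    · rw [if_neg (by tauto)]
      have hmem : j + 1 ∈ S := by
        refine Finset.mem_erase.mpr ⟨Ne.symm hl1, Finset.mem_erase.mpr ⟨by omega,
          Finset.mem_range.mpr (by omega)⟩⟩
      have hzero : (∏ i ∈ S, |aco j i - aco j j| / |aco j i - aco j ℓ|) = 0 := by
        refine Finset.prod_eq_zero hmem ?_
        rw [aco_jsucc, sub_self, abs_zero, zero_div]
      rw [← hzero]
      exact hL
end

section
/- Let $n \ge 1$. A vector $\mathbf{w} \in \mathbb{W} = \prod_{i \ge 0}\mathbb{Q}$ lies in the cone spanned over $\mathbb{Q}_{\ge 0}$ by $\rho_{-1}, \rho_0, \dots, \rho_{n-2}, \tau^\infty_{n-2}, \tau^\infty_{n-1}$ if and only if: $\chi_{[i,j]}(\mathbf{w}) \ge 0$ for all $i \le j \le n$ with $j - i$ even; $\chi_{[i,i+1]}(\mathbf{w}) = 0$ for all $i \ge n$; and $\chi_{[n-1,n]}(\mathbf{w}) \ge 0$. -/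
def eps (i : ℕ) : ℕ → ℚ := fun k => if k = i then 1 else 0

def rho (i : ℕ) : ℕ → ℚ := eps i + eps (i + 1)

def tauInf (i : ℕ) : ℕ → ℚ := fun k => if i ≤ k then 1 else 0

def chi (i j : ℕ) (w : ℕ → ℚ) : ℚ := ∑ ℓ ∈ Finset.Icc i j, (-1 : ℚ) ^ (ℓ - i) * w ℓ

lemma chi_same (i : ℕ) (w : ℕ → ℚ) : chi i i w = w i := by simp [chi]

lemma chi_succ (i j : ℕ) (h : i ≤ j + 1) (w : ℕ → ℚ) :
    chi i (j + 1) w = chi i j w + (-1 : ℚ) ^ (j + 1 - i) * w (j + 1) := by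
  unfold chi
  rw [Finset.sum_Icc_succ_top h]

lemma chi_pair (i : ℕ) (w : ℕ → ℚ) : chi i (i + 1) w = w i - w (i + 1) := by
  rw [chi_succ i i (by omega), chi_same]
  have h : i + 1 - i = 1 := by omega
  rw [h]
  ring

lemma chi_split (p q r : ℕ) (hpq : p < q) (hqr : q ≤ r) (w : ℕ → ℚ) :
    chi p r w = chi p (q - 1) w + (-1 : ℚ) ^ (q - p) * chi q r w := by
  induction r, hqr using Nat.le_induction with
  | base =>
      obtain ⟨q', rfl⟩ : ∃ q', q = q' + 1 := ⟨q - 1, by omega⟩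
      rw [chi_succ p q' (by omega), chi_same]
      simp
  | succ r hr ih =>
      rw [chi_succ p r (by omega), chi_succ q r (by omega), ih, mul_add, ← mul_assoc,
        ← pow_add]
      have h : q - p + (r + 1 - q) = r + 1 - p := by omega
      rw [h]
      ring

lemma chi_left (p r : ℕ) (h : p < r) (w : ℕ → ℚ) :
    chi p r w = w p - chi (p + 1) r w := by
  rw [chi_split p (p + 1) r (by omega) h w]
  have h1 : p + 1 - 1 = p := by omega
  have h2 : p + 1 - p = 1 := by omega
  rw [h1, h2, chi_same]
  ring

lemma chi_add (i j : ℕ) (u v : ℕ → ℚ) : chi i j (u + v) = chi i j u + chi i j v := by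
  simp [chi, Pi.add_apply, mul_add, Finset.sum_add_distrib]

lemma chi_smul (i j : ℕ) (c : ℚ) (u : ℕ → ℚ) : chi i j (c • u) = c * chi i j u := by
  simp only [chi, Pi.smul_apply, smul_eq_mul, Finset.mul_sum]
  apply Finset.sum_congr rfl
  intros; ring

lemma chi_sum (i j : ℕ) (s : Finset ℕ) (f : ℕ → ℕ → ℚ) :
    chi i j (∑ m ∈ s, f m) = ∑ m ∈ s, chi i j (f m) := by
  classical
  induction s using Finset.induction_on with
  | empty => simp [chi]
  | insert _ _ h ih => rw [Finset.sum_insert h, chi_add, ih, Finset.sum_insert h]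

lemma chi_eps (i j t : ℕ) :
    chi i j (eps t) = if i ≤ t ∧ t ≤ j then (-1 : ℚ) ^ (t - i) else 0 := by
  unfold chi eps
  simp only [mul_ite, mul_one, mul_zero]
  rw [Finset.sum_ite_eq' (Finset.Icc i j) t (fun ℓ => (-1 : ℚ) ^ (ℓ - i))]
  simp [Finset.mem_Icc]

lemma chi_eps0_nonneg (i j : ℕ) : 0 ≤ chi i j (eps 0) := by
  rw [chi_eps]
  split_ifs with h
  · have h0 : 0 - i = 0 := by omega
    rw [h0]; norm_num
  · exact le_refl 0

lemma chi_rho_nonneg (i j m : ℕ) (hij : i ≤ j) (hev : Even (j - i)) :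
    0 ≤ chi i j (rho m) := by
  have h : chi i j (rho m) = chi i j (eps m) + chi i j (eps (m + 1)) := by
    rw [← chi_add]; rfl
  rw [h, chi_eps, chi_eps]
  split_ifs with h1 h2 h2
  · have hm : m + 1 - i = (m - i) + 1 := by omega
    rw [hm, pow_succ]
    have : (-1 : ℚ) ^ (m - i) + (-1 : ℚ) ^ (m - i) * (-1) = 0 := by ring
    linarith
  · have hmj : m = j := by omega
    subst hmj
    rw [Even.neg_one_pow hev]
    norm_num
  · have h0 : m + 1 - i = 0 := by omega
    rw [h0]
    norm_num
  · norm_num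

lemma chi_tau_aux (m i k : ℕ) : 0 ≤ chi i (i + 2 * k) (tauInf m) := by
  induction k with
  | zero =>
      simp only [Nat.mul_zero, Nat.add_zero, chi_same, tauInf]
      split_ifs <;> norm_num
  | succ k ih =>
      have h1 : i + 2 * (k + 1) = (i + 2 * k + 1) + 1 := by ring
      rw [h1, chi_succ i (i + 2 * k + 1) (by omega), chi_succ i (i + 2 * k) (by omega)]
      have e1 : i + 2 * k + 1 - i = 2 * k + 1 := by omega
      have e2 : i + 2 * k + 1 + 1 - i = 2 * k + 2 := by omega
      rw [e1, e2]
      have p1 : (-1 : ℚ) ^ (2 * k + 1) = -1 := Odd.neg_one_pow ⟨k, by ring⟩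
      have p2 : (-1 : ℚ) ^ (2 * k + 2) = 1 := Even.neg_one_pow ⟨k + 1, by ring⟩
      rw [p1, p2]
      have mono : tauInf m (i + 2 * k + 1) ≤ tauInf m (i + 2 * k + 1 + 1) := by
        unfold tauInf
        split_ifs <;> (try norm_num) <;> omega
      linarith

lemma chi_tau_nonneg (i j m : ℕ) (hij : i ≤ j) (hev : Even (j - i)) :
    0 ≤ chi i j (tauInf m) := by
  obtain ⟨k, hk⟩ := hev
  have h : j = i + 2 * k := by omega
  subst h
  exact chi_tau_aux m i k

lemma sum_rho_apply (c : ℕ → ℚ) (N k : ℕ) :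
    (∑ m ∈ Finset.range N, c (m + 1) * rho m k)
      = (if k < N then c (k + 1) else 0) + (if 1 ≤ k ∧ k ≤ N then c k else 0) := by
  unfold rho eps
  simp only [Pi.add_apply, mul_add, Finset.sum_add_distrib, mul_ite, mul_one, mul_zero]
  congr 1
  · rw [Finset.sum_ite_eq (Finset.range N) k (fun m => c (m + 1))]
    simp [Finset.mem_range]
  · rcases k with _ | k'
    · simp
    · simp only [add_left_inj]
      rw [Finset.sum_ite_eq (Finset.range N) k' (fun m => c (m + 1))]
      simp only [Finset.mem_range]
      split_ifs <;> first | rfl | omega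

lemma coord_apply (c : ℕ → ℚ) (n k : ℕ) :
    (c 0 • eps 0 + ∑ i ∈ Finset.range (n - 1), c (i + 1) • rho i
        + c n • tauInf (n - 2) + c (n + 1) • tauInf (n - 1)) k
      = c 0 * eps 0 k + (∑ i ∈ Finset.range (n - 1), c (i + 1) * rho i k)
        + c n * tauInf (n - 2) k + c (n + 1) * tauInf (n - 1) k := by
  simp [Finset.sum_apply]

/-- A vector `w ∈ 𝕎 = ∏_{i≥0} ℚ` lies in the cone spanned over `ℚ_{≥0}` by
`ρ_{-1}, ρ_0, …, ρ_{n-2}, τ^∞_{n-2}, τ^∞_{n-1}` iff `χ_{[i,j]}(w) ≥ 0` for all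
`i ≤ j ≤ n` with `j - i` even, `χ_{[i,i+1]}(w) = 0` for all `i ≥ n`, and
`χ_{[n-1,n]}(w) ≥ 0`. -/
theorem stmt11 (n : ℕ) (hn : 1 ≤ n) (w : ℕ → ℚ) :
    (∃ c : ℕ → ℚ, (∀ i, 0 ≤ c i) ∧
        w = c 0 • eps 0 + ∑ i ∈ Finset.range (n - 1), c (i + 1) • rho i
              + c n • tauInf (n - 2) + c (n + 1) • tauInf (n - 1)) ↔
      ((∀ i j, i ≤ j → j ≤ n → Even (j - i) → 0 ≤ chi i j w) ∧
        (∀ i, n ≤ i → chi i (i + 1) w = 0) ∧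
        0 ≤ chi (n - 1) n w) := by
  constructor
  · rintro ⟨c, hc, hw⟩
    have hwk : ∀ k, n ≤ k → w k = c n + c (n + 1) := by
      intro k hk
      rw [hw, coord_apply, sum_rho_apply]
      simp only [eps, tauInf]
      rw [if_neg (by omega : ¬ k = 0), if_neg (by omega : ¬ k < n - 1),
        if_neg (by omega : ¬ (1 ≤ k ∧ k ≤ n - 1)), if_pos (by omega : n - 2 ≤ k),
        if_pos (by omega : n - 1 ≤ k)]
      ring
    refine ⟨?_, ?_, ?_⟩
    · intro i j hij hjn hev
      have hchi : chi i j w = c 0 * chi i j (eps 0)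
          + (∑ m ∈ Finset.range (n - 1), c (m + 1) * chi i j (rho m))
          + c n * chi i j (tauInf (n - 2)) + c (n + 1) * chi i j (tauInf (n - 1)) := by
        rw [hw]
        simp only [chi_add, chi_smul, chi_sum]
      rw [hchi]
      have h1 : 0 ≤ c 0 * chi i j (eps 0) := mul_nonneg (hc 0) (chi_eps0_nonneg i j)
      have h2 : 0 ≤ ∑ m ∈ Finset.range (n - 1), c (m + 1) * chi i j (rho m) :=
        Finset.sum_nonneg fun m _ => mul_nonneg (hc _) (chi_rho_nonneg i j m hij hev)
      have h3 : 0 ≤ c n * chi i j (tauInf (n - 2)) :=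
        mul_nonneg (hc n) (chi_tau_nonneg i j _ hij hev)
      have h4 : 0 ≤ c (n + 1) * chi i j (tauInf (n - 1)) :=
        mul_nonneg (hc (n + 1)) (chi_tau_nonneg i j _ hij hev)
      linarith
    · intro i hi
      rw [chi_pair, hwk i hi, hwk (i + 1) (by omega)]
      ring
    · have h1 : n - 1 + 1 = n := by omega
      have hp := chi_pair (n - 1) w
      rw [h1] at hp
      rw [hp, hwk n le_rfl, hw, coord_apply, sum_rho_apply]
      simp only [eps, tauInf]
      rcases Nat.lt_or_ge n 2 with h2 | h2
      · have hn1 : n = 1 := by omega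
        subst hn1
        norm_num
        linarith [hc 0]
      · rw [if_neg (by omega : ¬ n - 1 = 0), if_neg (by omega : ¬ n - 1 < n - 1),
          if_pos (by omega : 1 ≤ n - 1 ∧ n - 1 ≤ n - 1), if_pos (by omega : n - 2 ≤ n - 1),
          if_pos (by omega : n - 1 ≤ n - 1)]
        have := hc (n - 1)
        ring_nf
        linarith
  · rintro ⟨H1, H2, H3⟩
    have wconst : ∀ k, n ≤ k → w k = w n := by
      intro k hk
      induction k, hk using Nat.le_induction with
      | base => rfl
      | succ k hk ih =>
          have h0 := H2 k hk
          rw [chi_pair] at h0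
          linarith
    have hnS : n ∈ (Finset.range (n + 1)).filter (fun i => Even (n - i)) := by
      simp
    have hS : ((Finset.range (n + 1)).filter (fun i => Even (n - i))).Nonempty := ⟨n, hnS⟩
    set a : ℚ := ((Finset.range (n + 1)).filter (fun i => Even (n - i))).inf' hS
      (fun i => chi i n w) with hadef
    have ha_le : ∀ i, i ≤ n → Even (n - i) → a ≤ chi i n w := by
      intro i h1 h2
      exact Finset.inf'_le _ (by simp [Finset.mem_filter, Finset.mem_range]; exact ⟨by omega, h2⟩)
    have ha0 : 0 ≤ a := by
      apply Finset.le_inf'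
      intro i hi
      simp only [Finset.mem_filter, Finset.mem_range] at hi
      exact H1 i n (by omega) le_rfl hi.2
    have haw : a ≤ w n := by
      have h := ha_le n le_rfl (by simp)
      rwa [chi_same] at h
    have hsucc : ∀ i, i ≤ n → chi i n w = chi i (n - 1) w + (-1 : ℚ) ^ (n - i) * w n := by
      intro i hi
      have h1 : n - 1 + 1 = n := by omega
      have h := chi_succ i (n - 1) (by omega) w
      rw [h1] at h
      exact h
    have key : ∀ i, Odd (n - i) → w n - chi i (n - 1) w ≤ a := by
      intro i hodd
      have hin : i < n := by
        obtain ⟨m, hm⟩ := hodd; omega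
      have hi : chi i n w = chi i (n - 1) w - w n := by
        rw [hsucc i (le_of_lt hin), Odd.neg_one_pow hodd]; ring
      have hle : -(chi i n w) ≤ a := by
        apply Finset.le_inf'
        intro i' hi'
        simp only [Finset.mem_filter, Finset.mem_range] at hi'
        obtain ⟨hi'n, hi'ev⟩ := hi'
        have hne : i ≠ i' := by
          rintro rfl
          obtain ⟨m, hm⟩ := hodd; obtain ⟨p, hp⟩ := hi'ev; omega
        rcases lt_or_gt_of_ne hne with hlt | hgt
        · have hsplit := chi_split i i' n hlt (by omega) w
          have hodd' : Odd (i' - i) := by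
            obtain ⟨m, hm⟩ := hodd; obtain ⟨p, hp⟩ := hi'ev
            exact ⟨m - p, by omega⟩
          rw [Odd.neg_one_pow hodd'] at hsplit
          have hpos : 0 ≤ chi i (i' - 1) w := by
            apply H1 i (i' - 1) (by omega) (by omega)
            obtain ⟨m, hm⟩ := hodd'
            exact ⟨m, by omega⟩
          linarith
        · have hsplit := chi_split i' i n hgt (by omega) w
          have hodd' : Odd (i - i') := by
            obtain ⟨m, hm⟩ := hodd; obtain ⟨p, hp⟩ := hi'ev
            exact ⟨p - m - 1, by omega⟩
          rw [Odd.neg_one_pow hodd'] at hsplit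
          have hpos : 0 ≤ chi i' (i - 1) w := by
            apply H1 i' (i - 1) (by omega) (by omega)
            obtain ⟨m, hm⟩ := hodd'
            exact ⟨m, by omega⟩
          linarith
      linarith
    set c : ℕ → ℚ := fun i =>
      if n + 2 ≤ i then 0
      else if i = n + 1 then w n - a
      else if i = n then a
      else if i = n - 1 then chi (n - 1) n w
      else if Even (n - i) then chi i n w - a
      else chi i (n - 1) w - (w n - a) with hcdef
    have hcn : c n = a := by
      simp only [hcdef]
      split_ifs <;> first | rfl | (exfalso; omega)
    have hcn1 : c (n + 1) = w n - a := by
      simp only [hcdef]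
      split_ifs <;> first | rfl | (exfalso; omega)
    have hcm1 : c (n - 1) = chi (n - 1) n w := by
      simp only [hcdef]
      split_ifs <;> first | rfl | (exfalso; omega)
    have hceven : ∀ i, i ≤ n - 2 → 2 ≤ n → Even (n - i) → c i = chi i n w - a := by
      intro i h1 h2 h3
      simp only [hcdef]
      rw [if_neg (by omega), if_neg (by omega), if_neg (by omega), if_neg (by omega),
        if_pos h3]
    have hcodd : ∀ i, i ≤ n - 2 → 2 ≤ n → Odd (n - i) →
        c i = chi i (n - 1) w - (w n - a) := by
      intro i h1 h2 h3
      simp only [hcdef]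
      rw [if_neg (by omega), if_neg (by omega), if_neg (by omega), if_neg (by omega),
        if_neg (Nat.not_even_iff_odd.mpr h3)]
    refine ⟨c, ?_, ?_⟩
    · intro i
      simp only [hcdef]
      split_ifs with h1 h2 h3 h4 h5
      · exact le_refl 0
      · linarith
      · exact ha0
      · exact H3
      · have := ha_le i (by omega) h5
        linarith
      · have hodd : Odd (n - i) := Nat.not_even_iff_odd.mp h5
        have := key i hodd
        linarith
    · funext k
      rw [coord_apply, sum_rho_apply]
      simp only [eps, tauInf]
      by_cases hk1 : n ≤ k
      · rw [if_neg (by omega : ¬ k = 0), if_neg (by omega : ¬ k < n - 1),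
          if_neg (by omega : ¬ (1 ≤ k ∧ k ≤ n - 1)), if_pos (by omega : n - 2 ≤ k),
          if_pos (by omega : n - 1 ≤ k), hcn, hcn1, wconst k hk1]
        ring
      · by_cases hk2 : k = n - 1
        · subst hk2
          have hp := chi_pair (n - 1) w
          rw [(by omega : n - 1 + 1 = n)] at hp
          rcases Nat.lt_or_ge n 2 with h2 | h2
          · have hn1 : n = 1 := by omega
            subst hn1
            norm_num
            rw [hcm1, hcn, hcn1] at *
            simp at hp ⊢
            linarith
          · rw [if_neg (by omega : ¬ n - 1 = 0), if_neg (by omega : ¬ n - 1 < n - 1),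
              if_pos (by omega : 1 ≤ n - 1 ∧ n - 1 ≤ n - 1),
              if_pos (by omega : n - 2 ≤ n - 1), if_pos (by omega : n - 1 ≤ n - 1),
              hcm1, hcn, hcn1]
            linarith
        · -- k < n - 1, so n ≥ 2 and k ≤ n - 2
          have hk3 : k < n - 1 := by omega
          have hn2 : 2 ≤ n := by omega
          by_cases hk4 : k = n - 2
          · subst hk4
            rw [if_pos hk3, if_neg (by omega : ¬ n - 1 ≤ n - 2),
              if_pos (by omega : n - 2 ≤ n - 2), hcn,
              (by omega : n - 2 + 1 = n - 1), hcm1]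
            have hleft := chi_left (n - 2) n (by omega) w
            rw [(by omega : n - 2 + 1 = n - 1)] at hleft
            have hcnn2 : c (n - 2) = chi (n - 2) n w - a :=
              hceven (n - 2) le_rfl hn2 ⟨1, by omega⟩
            rcases Nat.lt_or_ge n 3 with h3 | h3
            · have hn2' : n = 2 := by omega
              subst hn2'
              norm_num at *
              rw [hcnn2]
              linarith
            · rw [if_neg (by omega : ¬ n - 2 = 0),
                if_pos (by omega : 1 ≤ n - 2 ∧ n - 2 ≤ n - 1), hcnn2]
              ring_nf
              linarith
          · -- k < n - 2
            have hk5 : k < n - 2 := by omega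
            rw [if_pos hk3, if_neg (by omega : ¬ n - 2 ≤ k), if_neg (by omega : ¬ n - 1 ≤ k)]
            have hsum : (c 0 * if k = 0 then (1:ℚ) else 0)
                + (c (k + 1) + if 1 ≤ k ∧ k ≤ n - 1 then c k else 0)
                = c k + c (k + 1) := by
              rcases Nat.eq_zero_or_pos k with rfl | hkpos
              · rw [if_pos rfl, if_neg (by omega)]; ring
              · rw [if_neg (by omega : ¬ k = 0), if_pos (by omega : 1 ≤ k ∧ k ≤ n - 1)]
                ring
            rw [hsum]
            have hleft2 : chi k n w = w k - chi (k + 1) n w := chi_left k n (by omega) w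
            have hleftm : chi k (n - 1) w = w k - chi (k + 1) (n - 1) w :=
              chi_left k (n - 1) (by omega) w
            have hs1 := hsucc (k + 1) (by omega)
            rcases Nat.even_or_odd (n - k) with hev | hod
            · have hck : c k = chi k n w - a := hceven k (by omega) hn2 hev
              have hodk : Odd (n - (k + 1)) := by
                obtain ⟨m, hm⟩ := hev; exact ⟨m - 1, by omega⟩
              have hck1 : c (k + 1) = chi (k + 1) (n - 1) w - (w n - a) :=
                hcodd (k + 1) (by omega) hn2 hodk
              rw [Odd.neg_one_pow hodk] at hs1
              rw [hck, hck1]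
              linarith
            · have hck : c k = chi k (n - 1) w - (w n - a) := hcodd k (by omega) hn2 hod
              have hevk1 : Even (n - (k + 1)) := by
                obtain ⟨m, hm⟩ := hod; exact ⟨m, by omega⟩
              have hck1 : c (k + 1) = chi (k + 1) n w - a :=
                hceven (k + 1) (by omega) hn2 hevk1
              rw [Even.neg_one_pow hevk1] at hs1
              rw [hck, hck1]
              linarith
end
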